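/- Let I be a nonempty finite set and a, c : I → ℝ. Define f : ℝ → ℝ by f(t) := max_{i ∈ I} (a_i·t − c_i), set m := min_{i ∈ I} c_i and Ī := {i ∈ I : c_i = m}. Then the following are equivalent: (1) there exists i ∈ Ī with a_i > 0; (2) there exists ε > 0 such that f is strictly increasing on [0, ε). -/

import Mathlib

/-- Strict version of the one-variable analytic core of Lemma 4.8 of the paper.  For a
nonempty finite index set `I` and `f(t) = max_{i ∈ I}(a_i·t − c_i)`, with `m = min_i c_i`
and `Ī = {i : c_i = m}`, the following are equivalent: (1) some `i ∈ Ī` has `a_i > 0`;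
(2) `f` is strictly increasing on `[0,ε)` for some `ε > 0`. -/
theorem stmt13 {ι : Type*} [Fintype ι] [Nonempty ι] (a c : ι → ℝ) :
    (∃ i : ι, c i = Finset.univ.inf' Finset.univ_nonempty c ∧ 0 < a i) ↔
      ∃ ε > (0 : ℝ), StrictMonoOn
        (fun t : ℝ => Finset.univ.sup' Finset.univ_nonempty fun i => a i * t - c i)
        (Set.Ico (0 : ℝ) ε) := by
  set m := Finset.univ.inf' Finset.univ_nonempty c with hm
  have hmle : ∀ j : ι, m ≤ c j := fun j => Finset.inf'_le c (Finset.mem_univ j)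
  constructor
  · rintro ⟨i, hci, hai⟩
    set S := Finset.univ.filter (fun j => c j = m) with hS
    have hiS : i ∈ S := by simp [hS, hci]
    have hSne : S.Nonempty := ⟨i, hiS⟩
    set M := S.sup' hSne a with hM
    obtain ⟨k, hkS, hk⟩ := S.exists_mem_eq_sup' hSne a
    have hMpos : 0 < M := lt_of_lt_of_le hai (Finset.le_sup' a hiS)
    have hck : c k = m := (Finset.mem_filter.mp hkS).2
    have hkey : ∀ j : ι, ¬ a j ≤ M → m < c j := by
      intro j hj
      rcases lt_or_eq_of_le (hmle j) with h | h
      · exact h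
      · exact absurd (Finset.le_sup' a (by simp [hS, h.symm])) hj
    refine ⟨Finset.univ.inf' Finset.univ_nonempty
        (fun j => if a j ≤ M then 1 else (c j - m)/(a j - M)), ?_, ?_⟩
    · rw [gt_iff_lt, Finset.lt_inf'_iff]
      intro j _
      by_cases h : a j ≤ M
      · simp [h]
      · simp only [h, if_false]
        exact div_pos (by linarith [hkey j h]) (by linarith [not_le.mp h])
    · intro s hs t ht hst
      simp only
      have hft : M * t - m ≤ Finset.univ.sup' Finset.univ_nonempty fun i => a i * t - c i := by
        calc M * t - m = a k * t - c k := by rw [hM, hk, hck]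
        _ ≤ _ := Finset.le_sup' (fun i => a i * t - c i) (Finset.mem_univ k)
      refine lt_of_lt_of_le ?_ hft
      rw [Finset.sup'_lt_iff]
      intro j _
      by_cases h : a j ≤ M
      · have h1 : a j * s ≤ M * s := mul_le_mul_of_nonneg_right h hs.1
        have h2 : M * s < M * t := by nlinarith
        linarith [hmle j]
      · have hε : s < (c j - m)/(a j - M) := by
          refine lt_of_lt_of_le hs.2 ?_
          have := Finset.inf'_le (fun j => if a j ≤ M then 1 else (c j - m)/(a j - M))
            (Finset.mem_univ j)
          exact this.trans_eq (by simp [h])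
        have hMj : M < a j := not_le.mp h
        have : s * (a j - M) < c j - m := (lt_div_iff₀ (by linarith)).mp hε
        nlinarith
  · rintro ⟨ε, hε, hmono⟩
    by_contra hcon
    push_neg at hcon
    set ε' := Finset.univ.inf' Finset.univ_nonempty
        (fun j => if a j ≤ 0 then 1 else (c j - m)/(a j)) with hε'
    have hε'pos : 0 < ε' := by
      rw [hε', Finset.lt_inf'_iff]
      intro j _
      by_cases h : a j ≤ 0
      · simp [h]
      · simp only [h, if_false]
        have hcj : m < c j := by
          rcases lt_or_eq_of_le (hmle j) with h1 | h1
          · exact h1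
          · exact absurd (hcon j h1.symm) h
        exact div_pos (by linarith) (not_le.mp h)
    set t := min ε ε' / 2 with htdef
    have htpos : 0 < t := by positivity
    have htε : t < ε := by
      have : min ε ε' ≤ ε := min_le_left _ _
      rw [htdef]; linarith
    have htε' : t < ε' := by
      have : min ε ε' ≤ ε' := min_le_right _ _
      rw [htdef]; linarith
    have h0 := hmono (Set.mem_Ico.mpr ⟨le_refl 0, hε⟩)
      (Set.mem_Ico.mpr ⟨le_of_lt htpos, htε⟩) htpos
    simp only at h0
    obtain ⟨j0, _, hj0⟩ := Finset.exists_mem_eq_inf' (Finset.univ_nonempty (α := ι)) c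
    have hf0 : -m ≤ Finset.univ.sup' Finset.univ_nonempty fun i => a i * 0 - c i := by
      calc -m = a j0 * 0 - c j0 := by rw [hm, hj0]; ring
      _ ≤ _ := Finset.le_sup' (fun i => a i * 0 - c i) (Finset.mem_univ j0)
    have hft : (Finset.univ.sup' Finset.univ_nonempty fun i => a i * t - c i) ≤ -m := by
      rw [Finset.sup'_le_iff]
      intro j _
      by_cases h : a j ≤ 0
      · have : a j * t ≤ 0 := mul_nonpos_of_nonpos_of_nonneg h (le_of_lt htpos)
        linarith [hmle j]
      · have hja : 0 < a j := not_le.mp h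
        have ht2 : t < (c j - m) / a j := by
          refine lt_of_lt_of_le htε' ?_
          rw [hε']
          exact (Finset.inf'_le (fun j => if a j ≤ 0 then 1 else (c j - m)/(a j))
            (Finset.mem_univ j)).trans_eq (by simp [h])
        have : t * a j < c j - m := (lt_div_iff₀ hja).mp ht2
        nlinarith
    linarith
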